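/- Suppose A ∈ ℝ^{n×m} satisfies the restricted isometry property with δ_{2s}(A) < √2 − 1, and suppose x ∈ ℝ^m is s-sparse with Ax = b (noiseless case, ε = 0). Then x is the unique minimizer of min{‖x̃‖₁ : Ax̃ = b}. -/

import Mathlib

open Matrix BigOperators

/-- Euclidean (L2) norm of a vector in `ℝ^n`. -/
noncomputable def l2norm {n : ℕ} (x : Fin n → ℝ) : ℝ := Real.sqrt (∑ i, x i ^ 2)

/-- The `ℓ₁` norm of a vector. -/
noncomputable def l1norm {n : ℕ} (x : Fin n → ℝ) : ℝ := ∑ i, |x i|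

/-- A vector is `s`-sparse if it has at most `s` nonzero entries. -/
def Sparse {m : ℕ} (s : ℕ) (x : Fin m → ℝ) : Prop := {i | x i ≠ 0}.ncard ≤ s

/-- The restricted isometry constant `δ_s(A)`: the smallest `δ ≥ 0` such that
`(1−δ)‖x‖₂² ≤ ‖Ax‖₂² ≤ (1+δ)‖x‖₂²` for all `s`-sparse `x`. -/
noncomputable def ripConst {n m : ℕ} (s : ℕ) (A : Matrix (Fin n) (Fin m) ℝ) : ℝ :=
  sInf {δ : ℝ | 0 ≤ δ ∧ ∀ x : Fin m → ℝ, Sparse s x →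
    (1 - δ) * l2norm x ^ 2 ≤ l2norm (A *ᵥ x) ^ 2 ∧
    l2norm (A *ᵥ x) ^ 2 ≤ (1 + δ) * l2norm x ^ 2}

lemma l2_sq {n : ℕ} (x : Fin n → ℝ) : l2norm x ^ 2 = ∑ i, x i ^ 2 := by
  rw [l2norm, Real.sq_sqrt]; positivity

lemma sparse_of_card {m s : ℕ} (x : Fin m → ℝ) (T : Finset (Fin m))
    (hsub : ∀ i, x i ≠ 0 → i ∈ T) (hc : T.card ≤ s) : Sparse s x := by
  have h1 : {i | x i ≠ 0}.ncard ≤ T.card := by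
    rw [← Set.ncard_coe_finset T]
    exact Set.ncard_le_ncard (fun i hi => hsub i hi) T.finite_toSet
  exact h1.trans hc

lemma eq_zero_of_sum_sq {m : ℕ} (x : Fin m → ℝ) (h : ∑ i, x i ^ 2 ≤ 0) : x = 0 := by
  funext i
  have h0 : ∑ i, x i ^ 2 = 0 := le_antisymm h (by positivity)
  have := (Finset.sum_eq_zero_iff_of_nonneg (fun i _ => sq_nonneg (x i))).1 h0 i (Finset.mem_univ i)
  simpa [pow_eq_zero_iff] using this

section Main
variable {n m : ℕ} (A : Matrix (Fin n) (Fin m) ℝ)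

/-- Restricted orthogonality. -/
lemma restro (s : ℕ) (δ : ℝ)
    (hRIP : ∀ z : Fin m → ℝ, Sparse (2*s) z →
      (1-δ) * (∑ i, z i ^ 2) ≤ (∑ i, (A *ᵥ z) i ^ 2) ∧
      (∑ i, (A *ᵥ z) i ^ 2) ≤ (1+δ) * (∑ i, z i ^ 2))
    (u v : Fin m → ℝ) (hu : Sparse s u) (hv : Sparse s v)
    (hdisj : ∀ i, u i = 0 ∨ v i = 0) :
    |∑ i, (A *ᵥ u) i * (A *ᵥ v) i| ≤
      δ * (Real.sqrt (∑ i, u i ^ 2) * Real.sqrt (∑ i, v i ^ 2)) := by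
  by_cases hu0 : ∑ i, u i ^ 2 = 0
  · have : u = 0 := eq_zero_of_sum_sq u (le_of_eq hu0)
    simp [this, Matrix.mulVec_zero]
  by_cases hv0 : ∑ i, v i ^ 2 = 0
  · have : v = 0 := eq_zero_of_sum_sq v (le_of_eq hv0)
    simp [this, Matrix.mulVec_zero]
  have hupos : 0 < ∑ i, u i ^ 2 := lt_of_le_of_ne (by positivity) (Ne.symm hu0)
  have hvpos : 0 < ∑ i, v i ^ 2 := lt_of_le_of_ne (by positivity) (Ne.symm hv0)
  set α := Real.sqrt (∑ i, u i ^ 2) with hα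
  set β := Real.sqrt (∑ i, v i ^ 2) with hβ
  have hαpos : 0 < α := Real.sqrt_pos.2 hupos
  have hβpos : 0 < β := Real.sqrt_pos.2 hvpos
  have hα2 : α ^ 2 = ∑ i, u i ^ 2 := Real.sq_sqrt hupos.le
  have hβ2 : β ^ 2 = ∑ i, v i ^ 2 := Real.sq_sqrt hvpos.le
  set u' : Fin m → ℝ := fun i => α⁻¹ * u i with hu'
  set v' : Fin m → ℝ := fun i => β⁻¹ * v i with hv'
  have hu'sq : ∑ i, u' i ^ 2 = 1 := by
    simp only [hu', mul_pow, ← Finset.mul_sum, ← hα2, inv_pow]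
    exact inv_mul_cancel₀ (by positivity)
  have hv'sq : ∑ i, v' i ^ 2 = 1 := by
    simp only [hv', mul_pow, ← Finset.mul_sum, ← hβ2, inv_pow]
    exact inv_mul_cancel₀ (by positivity)
  have hdisj' : ∀ i, u' i * v' i = 0 := by
    intro i
    rcases hdisj i with h | h <;> simp [hu', hv', h]
  have hsp : ∀ (c d : ℝ), Sparse (2*s) (fun i => c * u' i + d * v' i) := by
    intro c d
    apply sparse_of_card _ ({i | u i ≠ 0}.toFinset ∪ {i | v i ≠ 0}.toFinset)
    · intro i hi
      by_contra hcon
      simp only [Finset.mem_union, Set.mem_toFinset, Set.mem_setOf_eq, not_or, not_not] at hcon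
      simp [hu', hv', hcon.1, hcon.2] at hi
    · calc ({i | u i ≠ 0}.toFinset ∪ {i | v i ≠ 0}.toFinset).card
          ≤ {i | u i ≠ 0}.toFinset.card + {i | v i ≠ 0}.toFinset.card :=
            Finset.card_union_le _ _
      _ ≤ s + s := by
          apply add_le_add
          · rw [← Set.ncard_eq_toFinset_card']; exact hu
          · rw [← Set.ncard_eq_toFinset_card']; exact hv
      _ = 2 * s := by ring
  have hplus : ∑ i, (u' i + v' i) ^ 2 = 2 := by
    have : ∀ i, (u' i + v' i) ^ 2 = u' i ^ 2 + v' i ^ 2 + 2 * (u' i * v' i) := by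
      intro i; ring
    simp only [this, Finset.sum_add_distrib, hu'sq, hv'sq, ← Finset.mul_sum]
    simp [hdisj']
    norm_num
  have hminus : ∑ i, (u' i - v' i) ^ 2 = 2 := by
    have : ∀ i, (u' i - v' i) ^ 2 = u' i ^ 2 + v' i ^ 2 - 2 * (u' i * v' i) := by
      intro i; ring
    simp only [this, Finset.sum_sub_distrib, Finset.sum_add_distrib, hu'sq, hv'sq,
      ← Finset.mul_sum]
    simp [hdisj']
    norm_num
  have hAadd : A *ᵥ (fun i => u' i + v' i) = fun i => (A *ᵥ u') i + (A *ᵥ v') i := by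
    funext j; simp [Matrix.mulVec, dotProduct, mul_add, Finset.sum_add_distrib]
  have hAsub : A *ᵥ (fun i => u' i - v' i) = fun i => (A *ᵥ u') i - (A *ᵥ v') i := by
    funext j; simp [Matrix.mulVec, dotProduct, mul_sub, Finset.sum_sub_distrib]
  have key1 := (hRIP _ (hsp 1 1)).2
  have key2 := (hRIP _ (hsp 1 (-1))).1
  have key3 := (hRIP _ (hsp 1 1)).1
  have key4 := (hRIP _ (hsp 1 (-1))).2
  simp only [one_mul, neg_one_mul, ← sub_eq_add_neg] at key1 key2 key3 key4
  rw [hplus] at key1 key3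
  rw [hminus] at key2 key4
  rw [hAadd] at key1 key3
  rw [hAsub] at key2 key4
  -- ip' = ∑ (A u') i * (A v') i
  have hexp : ∀ j, ((A *ᵥ u') j + (A *ᵥ v') j) ^ 2
      = (A *ᵥ u') j ^ 2 + (A *ᵥ v') j ^ 2 + 2 * ((A *ᵥ u') j * (A *ᵥ v') j) := by
    intro j; ring
  have hexp2 : ∀ j, ((A *ᵥ u') j + -(A *ᵥ v') j) ^ 2
      = (A *ᵥ u') j ^ 2 + (A *ᵥ v') j ^ 2 + -(2 * ((A *ᵥ u') j * (A *ᵥ v') j)) := by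
    intro j; ring
  simp only [hexp, Finset.sum_add_distrib, ← Finset.mul_sum] at key1 key3
  simp only [sub_eq_add_neg] at key2 key4
  simp only [hexp2, Finset.sum_add_distrib, Finset.sum_neg_distrib,
    ← Finset.mul_sum] at key2 key4
  set ip := ∑ j, (A *ᵥ u') j * (A *ᵥ v') j with hip
  have hip_le : ip ≤ δ := by nlinarith [key1, key2]
  have hip_ge : -δ ≤ ip := by nlinarith [key3, key4]
  have hscale : ∑ j, (A *ᵥ u) j * (A *ᵥ v) j = α * β * ip := by
    have hu'' : ∀ j, (A *ᵥ u) j = α * (A *ᵥ u') j := by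
      intro j
      simp only [hu', Matrix.mulVec, dotProduct, Finset.mul_sum]
      refine Finset.sum_congr rfl fun i _ => ?_
      rw [mul_comm (A j i) (α⁻¹ * u i), mul_assoc α⁻¹ (u i) (A j i), ← mul_assoc,
        mul_inv_cancel₀ (ne_of_gt hαpos), one_mul, mul_comm]
    have hv'' : ∀ j, (A *ᵥ v) j = β * (A *ᵥ v') j := by
      intro j
      simp only [hv', Matrix.mulVec, dotProduct, Finset.mul_sum]
      refine Finset.sum_congr rfl fun i _ => ?_
      rw [mul_comm (A j i) (β⁻¹ * v i), mul_assoc β⁻¹ (v i) (A j i), ← mul_assoc,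
        mul_inv_cancel₀ (ne_of_gt hβpos), one_mul, mul_comm]
    simp only [hip, hu'', hv'']
    rw [Finset.mul_sum]
    congr 1; funext j; ring
  rw [hscale, abs_mul, abs_of_pos (mul_pos hαpos hβpos)]
  rw [mul_comm δ (α * β)]
  apply mul_le_mul_of_nonneg_left _ (mul_pos hαpos hβpos).le
  rw [abs_le]
  exact ⟨hip_ge, hip_le⟩

set_option maxHeartbeats 3200000 in
lemma candes_null (s : ℕ) (hs : 0 < s) (δ : ℝ)
    (hδ : δ < Real.sqrt 2 - 1) (hδ0 : 0 ≤ δ)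
    (hRIP : ∀ z : Fin m → ℝ, Sparse (2*s) z →
      (1-δ) * (∑ i, z i ^ 2) ≤ (∑ i, (A *ᵥ z) i ^ 2) ∧
      (∑ i, (A *ᵥ z) i ^ 2) ≤ (1+δ) * (∑ i, z i ^ 2))
    (T0 : Finset (Fin m)) (hT0 : T0.card ≤ s)
    (h : Fin m → ℝ) (hAh : A *ᵥ h = 0)
    (hcone : ∑ i ∈ T0ᶜ, |h i| ≤ ∑ i ∈ T0, |h i|) : h = 0 := by
  classical
  set c := T0ᶜ.card with hc
  set f : Fin c → ℝ := fun k => -|h ((T0ᶜ.orderIsoOfFin rfl k : Fin m))| with hf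
  set σ := Tuple.sort f with hσ
  set e : Fin c → Fin m := fun k => (T0ᶜ.orderIsoOfFin rfl (σ k) : Fin m) with he
  have einj : Function.Injective e := by
    intro a b hab
    have h1 : T0ᶜ.orderIsoOfFin rfl (σ a) = T0ᶜ.orderIsoOfFin rfl (σ b) := Subtype.ext hab
    exact σ.injective ((T0ᶜ.orderIsoOfFin rfl).injective h1)
  have emem : ∀ k, e k ∈ T0ᶜ := fun k => (T0ᶜ.orderIsoOfFin rfl (σ k)).2
  have esurj : ∀ i ∈ T0ᶜ, ∃ k, e k = i := by
    intro i hi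
    refine ⟨σ.symm ((T0ᶜ.orderIsoOfFin rfl).symm ⟨i, hi⟩), ?_⟩
    have h2 : T0ᶜ.orderIsoOfFin rfl (σ (σ.symm ((T0ᶜ.orderIsoOfFin rfl).symm ⟨i, hi⟩))) = ⟨i, hi⟩ := by
      rw [Equiv.apply_symm_apply, OrderIso.apply_symm_apply]
    show (T0ᶜ.orderIsoOfFin rfl (σ (σ.symm ((T0ᶜ.orderIsoOfFin rfl).symm ⟨i, hi⟩))) : Fin m) = i
    rw [h2]
  have emono : ∀ k l : Fin c, k ≤ l → |h (e l)| ≤ |h (e k)| := by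
    intro k l hkl
    have := Tuple.monotone_sort f hkl
    simp only [Function.comp_apply, hf] at this
    exact neg_le_neg_iff.1 this
  set K : ℕ → Finset (Fin c) := fun j => Finset.univ.filter (fun k => (k : ℕ)/s = j) with hK
  set a : ℕ → ℝ := fun j => ∑ k ∈ K j, |h (e k)| with ha
  set q : ℕ → ℝ := fun j => ∑ k ∈ K j, (h (e k))^2 with hq
  set T : ℕ → Finset (Fin m) := fun j => (K j).image e with hT
  have ha0 : ∀ j, 0 ≤ a j := fun j => Finset.sum_nonneg fun k _ => abs_nonneg _
  have hq0 : ∀ j, 0 ≤ q j := fun j => Finset.sum_nonneg fun k _ => sq_nonneg _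
  have memK : ∀ (k : Fin c) (j : ℕ), k ∈ K j ↔ (k : ℕ)/s = j := by
    intro k j; simp [hK]
  have memT : ∀ (k : Fin c) (j : ℕ), e k ∈ T j ↔ (k : ℕ)/s = j := by
    intro k j
    rw [hT]
    simp only [Finset.mem_image]
    constructor
    · rintro ⟨k', hk', hkk'⟩
      rw [← (memK k' j).1 hk', einj hkk']
    · intro hkj; exact ⟨k, (memK k j).2 hkj, rfl⟩
  have Tsub : ∀ j, ∀ i ∈ T j, i ∈ T0ᶜ := by
    intro j i hi
    rw [hT] at hi
    obtain ⟨k, _, rfl⟩ := Finset.mem_image.1 hi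
    exact emem k
  have cardK_le : ∀ j, (K j).card ≤ s := by
    intro j
    rw [← Finset.card_image_of_injective (K j) Fin.val_injective]
    have hsub : (K j).image Fin.val ⊆ Finset.Ico (j*s) (j*s+s) := by
      intro b hb
      obtain ⟨k, hk, rfl⟩ := Finset.mem_image.1 hb
      have hdiv := (memK k j).1 hk
      rw [Finset.mem_Ico]
      constructor
      · exact (Nat.le_div_iff_mul_le hs).1 (le_of_eq hdiv.symm)
      · have h1 : (k : ℕ)/s < j+1 := by omega
        have h2 := (Nat.div_lt_iff_lt_mul hs).1 h1
        have h3 : (j+1)*s = j*s + s := by ring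
        omega
    calc ((K j).image Fin.val).card ≤ (Finset.Ico (j*s) (j*s+s)).card :=
          Finset.card_le_card hsub
      _ = s := by rw [Nat.card_Ico]; omega
  have cardT_le : ∀ j, (T j).card ≤ s := fun j =>
    le_trans (Finset.card_image_le) (cardK_le j)
  have cardK_full : ∀ j (k : Fin c), k ∈ K (j+1) → (K j).card = s := by
    intro j k hk
    have hdiv := (memK k (j+1)).1 hk
    have hk1 : (j+1)*s ≤ (k : ℕ) := (Nat.le_div_iff_mul_le hs).1 (le_of_eq hdiv.symm)
    have hkc : (k : ℕ) < c := k.2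
    rw [← Finset.card_image_of_injective (K j) Fin.val_injective]
    have him : (K j).image Fin.val = Finset.Ico (j*s) (j*s+s) := by
      apply Finset.ext
      intro b
      simp only [Finset.mem_image, Finset.mem_Ico]
      constructor
      · rintro ⟨k', hk', rfl⟩
        have hdiv' := (memK k' j).1 hk'
        constructor
        · exact (Nat.le_div_iff_mul_le hs).1 (le_of_eq hdiv'.symm)
        · have h2 : (k' : ℕ)/s < j+1 := by omega
          have h3 := (Nat.div_lt_iff_lt_mul hs).1 h2
          have h4 : (j+1)*s = j*s + s := by ring
          omega
      · rintro ⟨hb1, hb2⟩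
        have hmul : (j+1)*s = j*s + s := by ring
        have hbc : b < c := by
          have : b < (j+1)*s := by omega
          omega
        refine ⟨⟨b, hbc⟩, ?_, rfl⟩
        rw [memK]
        have h1 : j ≤ b/s := (Nat.le_div_iff_mul_le hs).2 hb1
        have h2 : b/s < j+1 := (Nat.div_lt_iff_lt_mul hs).2 (by omega)
        show b / s = j
        omega
    rw [him, Nat.card_Ico]
    omega
  have block_ineq : ∀ j, Real.sqrt (q (j+1)) ≤ a j / Real.sqrt s := by
    intro j
    rcases Finset.eq_empty_or_nonempty (K (j+1)) with hemp | ⟨k0, hk0⟩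
    · rw [hq]
      simp only [hemp, Finset.sum_empty, Real.sqrt_zero]
      positivity
    have hcard : (K j).card = s := cardK_full j k0 hk0
    have hbound : ∀ k' ∈ K (j+1), |h (e k')| * s ≤ a j := by
      intro k' hk'
      have hk'lb : (j+1)*s ≤ (k' : ℕ) :=
        (Nat.le_div_iff_mul_le hs).1 (le_of_eq ((memK k' (j+1)).1 hk').symm)
      have : ∀ k'' ∈ K j, |h (e k')| ≤ |h (e k'')| := by
        intro k'' hk''
        apply emono
        have hdiv'' := (memK k'' j).1 hk''
        have h2 : (k'' : ℕ)/s < j+1 := by omega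
        have h3 := (Nat.div_lt_iff_lt_mul hs).1 h2
        have : (k'' : ℕ) ≤ (k' : ℕ) := by omega
        exact this
      calc |h (e k')| * s = ∑ _k'' ∈ K j, |h (e k')| := by
            rw [Finset.sum_const, hcard, nsmul_eq_mul, mul_comm]
        _ ≤ ∑ k'' ∈ K j, |h (e k'')| := Finset.sum_le_sum this
        _ = a j := rfl
    have hsq : q (j+1) ≤ (a j / Real.sqrt s)^2 := by
      have hspos : (0:ℝ) < s := by exact_mod_cast hs
      have hterm : ∀ k' ∈ K (j+1), (h (e k'))^2 ≤ (a j / s)^2 := by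
        intro k' hk'
        have h1 := hbound k' hk'
        have h2 : |h (e k')| ≤ a j / s := by
          rw [le_div_iff₀ hspos]; exact h1
        calc (h (e k'))^2 = |h (e k')|^2 := (sq_abs _).symm
          _ ≤ (a j / s)^2 := by
              apply pow_le_pow_left₀ (abs_nonneg _) h2
      calc q (j+1) ≤ ∑ _k' ∈ K (j+1), (a j / s)^2 := Finset.sum_le_sum hterm
        _ = (K (j+1)).card * (a j / s)^2 := by rw [Finset.sum_const, nsmul_eq_mul]
        _ ≤ s * (a j / s)^2 := by
            apply mul_le_mul_of_nonneg_right _ (sq_nonneg _)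
            exact_mod_cast cardK_le (j+1)
        _ = (a j / Real.sqrt s)^2 := by
            rw [div_pow, div_pow, Real.sq_sqrt hspos.le]
            field_simp
    calc Real.sqrt (q (j+1)) ≤ Real.sqrt ((a j / Real.sqrt s)^2) := Real.sqrt_le_sqrt hsq
      _ = a j / Real.sqrt s := Real.sqrt_sq (by positivity)
  have sum_a : ∑ j ∈ Finset.range (c+1), a j = ∑ i ∈ T0ᶜ, |h i| := by
    have step1 : ∑ j ∈ Finset.range (c+1), a j = ∑ k : Fin c, |h (e k)| := by
      rw [ha]
      apply Finset.sum_fiberwise_of_maps_to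
      intro k _
      rw [Finset.mem_range]
      have : (k : ℕ)/s ≤ (k : ℕ) := Nat.div_le_self _ _
      omega
    rw [step1]
    apply Finset.sum_bij (fun k _ => e k)
    · intro k _; exact emem k
    · intro k _ l _ hkl; exact einj hkl
    · intro i hi; obtain ⟨k, hk⟩ := esurj i hi; exact ⟨k, Finset.mem_univ k, hk⟩
    · intro k _; rfl
  set hT0v : Fin m → ℝ := fun i => if i ∈ T0 then h i else 0 with hT0v_def
  set v : ℕ → Fin m → ℝ := fun j i => if i ∈ T j then h i else 0 with hv_def
  set h01 : Fin m → ℝ := fun i => if i ∈ T0 ∪ T 0 then h i else 0 with h01_def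
  have sum_ite_sq : ∀ (S : Finset (Fin m)),
      ∑ i, (if i ∈ S then h i else 0)^2 = ∑ i ∈ S, h i ^ 2 := by
    intro S
    have hcg : ∀ i, (if i ∈ S then h i else 0)^2 = (if i ∈ S then h i ^ 2 else 0) := by
      intro i; split <;> simp
    simp_rw [hcg]
    rw [Finset.sum_ite_mem, Finset.univ_inter]
  have qeq : ∀ j, ∑ i, (v j i)^2 = q j := by
    intro j
    rw [show (∑ i, (v j i)^2) = ∑ i ∈ T j, h i ^ 2 from sum_ite_sq (T j)]
    rw [hT]
    rw [Finset.sum_image (fun k _ l _ hkl => einj hkl)]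
  have hT0vsq : ∑ i, (hT0v i)^2 = ∑ i ∈ T0, h i ^ 2 := sum_ite_sq T0
  have vsp : ∀ j, Sparse s (v j) := by
    intro j
    apply sparse_of_card _ (T j) _ (cardT_le j)
    intro i hi
    by_contra hcon
    simp [hv_def, hcon] at hi
  have hT0vsp : Sparse s hT0v := by
    apply sparse_of_card _ T0 _ hT0
    intro i hi
    by_contra hcon
    simp [hT0v_def, hcon] at hi
  have h01sp : Sparse (2*s) h01 := by
    apply sparse_of_card _ (T0 ∪ T 0)
    · intro i hi
      by_contra hcon
      simp only [h01_def] at hi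
      rw [if_neg hcon] at hi
      exact hi rfl
    · calc (T0 ∪ T 0).card ≤ T0.card + (T 0).card := Finset.card_union_le _ _
        _ ≤ s + s := add_le_add hT0 (cardT_le 0)
        _ = 2*s := by ring
  have h01split : ∀ i, h01 i = hT0v i + v 0 i := by
    intro i
    by_cases h1 : i ∈ T0
    · have h2 : i ∉ T 0 := fun hh => (Finset.mem_compl.1 (Tsub 0 i hh)) h1
      simp [h01_def, hT0v_def, hv_def, h1, h2]
    by_cases h2 : i ∈ T 0
    · simp [h01_def, hT0v_def, hv_def, h1, h2]
    · simp [h01_def, hT0v_def, hv_def, h1, h2]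
  have hdecomp : ∀ i, h i = h01 i + ∑ j ∈ Finset.Ico 1 (c+1), v j i := by
    intro i
    by_cases h1 : i ∈ T0
    · have hz : ∀ j ∈ Finset.Ico 1 (c+1), v j i = 0 := by
        intro j _
        have : i ∉ T j := fun hh => (Finset.mem_compl.1 (Tsub j i hh)) h1
        simp [hv_def, this]
      rw [Finset.sum_eq_zero hz]
      simp [h01_def, Finset.mem_union, h1]
    · obtain ⟨k, rfl⟩ := esurj i (Finset.mem_compl.2 h1)
      have hj0c : (k : ℕ)/s < c+1 := by
        have h2 := Nat.div_le_self (k : ℕ) s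
        have h3 := k.2
        omega
      by_cases hz : (k : ℕ)/s = 0
      · have h2 : e k ∈ T 0 := (memT k 0).2 hz
        have hzz : ∀ j ∈ Finset.Ico 1 (c+1), v j (e k) = 0 := by
          intro j hj
          rw [Finset.mem_Ico] at hj
          have : e k ∉ T j := by rw [memT]; omega
          simp [hv_def, this]
        rw [Finset.sum_eq_zero hzz]
        simp [h01_def, Finset.mem_union, h2]
      · have h2 : e k ∉ T 0 := by rw [memT]; omega
        have hsum : ∑ j ∈ Finset.Ico 1 (c+1), v j (e k) = h (e k) := by
          have hcg : ∀ j ∈ Finset.Ico 1 (c+1), v j (e k)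
              = if j = (k : ℕ)/s then h (e k) else 0 := by
            intro j hj
            by_cases hjj : j = (k : ℕ)/s
            · subst hjj; simp [hv_def, (memT k _).2 rfl]
            · have : e k ∉ T j := by
                rw [memT]
                exact fun hcc => hjj (hcc ▸ rfl)
              simp [hv_def, this, hjj]
          rw [Finset.sum_congr rfl hcg, Finset.sum_ite_eq' (Finset.Ico 1 (c+1)) ((k : ℕ)/s)]
          simp [Finset.mem_Ico, Nat.one_le_iff_ne_zero.2 hz, hj0c]
        rw [hsum]
        simp [h01_def, Finset.mem_union, h1, h2]
  have hvec : h = h01 + ∑ j ∈ Finset.Ico 1 (c+1), v j := by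
    funext i
    rw [hdecomp i]
    simp [Finset.sum_apply]
  have hAsum : A *ᵥ (∑ j ∈ Finset.Ico 1 (c+1), v j) = ∑ j ∈ Finset.Ico 1 (c+1), A *ᵥ v j := by
    rw [← Matrix.mulVecLin_apply, map_sum]
    simp [Matrix.mulVecLin_apply]
  have hA0 : A *ᵥ h01 + ∑ j ∈ Finset.Ico 1 (c+1), A *ᵥ v j = 0 := by
    rw [← hAsum, ← Matrix.mulVec_add, ← hvec, hAh]
  have hneg : A *ᵥ h01 = - ∑ j ∈ Finset.Ico 1 (c+1), A *ᵥ v j :=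
    eq_neg_of_add_eq_zero_left hA0
  have h01fun : h01 = hT0v + v 0 := by
    funext i; rw [h01split i]; simp
  -- disjointness
  have d1 : ∀ j, ∀ i, hT0v i = 0 ∨ v j i = 0 := by
    intro j i
    by_cases h1 : i ∈ T0
    · right
      have : i ∉ T j := fun hh => (Finset.mem_compl.1 (Tsub j i hh)) h1
      simp [hv_def, this]
    · left; simp [hT0v_def, h1]
  have d2 : ∀ j, j ≠ 0 → ∀ i, v 0 i = 0 ∨ v j i = 0 := by
    intro j hj i
    by_cases h1 : i ∈ T 0
    · right
      rw [hT] at h1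
      obtain ⟨k, hk, rfl⟩ := Finset.mem_image.1 h1
      have hz := (memK k 0).1 hk
      have : e k ∉ T j := by rw [memT]; omega
      simp [hv_def, this]
    · left; simp [hv_def, h1]
  set S0 := Real.sqrt (∑ i, (hT0v i)^2) with hS0
  set S1 := Real.sqrt (∑ i, (v 0 i)^2) with hS1
  set N := ∑ i, (h01 i)^2 with hN
  have hNnn : (0:ℝ) ≤ N := Finset.sum_nonneg fun i _ => sq_nonneg _
  have hS0nn : 0 ≤ S0 := Real.sqrt_nonneg _
  have hS1nn : 0 ≤ S1 := Real.sqrt_nonneg _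
  have hS0sq : S0^2 = ∑ i, (hT0v i)^2 :=
    Real.sq_sqrt (Finset.sum_nonneg fun i _ => sq_nonneg _)
  have hS1sq : S1^2 = ∑ i, (v 0 i)^2 :=
    Real.sq_sqrt (Finset.sum_nonneg fun i _ => sq_nonneg _)
  have hNsplit : N = S0^2 + S1^2 := by
    rw [hS0sq, hS1sq, hN, ← Finset.sum_add_distrib]
    refine Finset.sum_congr rfl fun i _ => ?_
    rcases d1 0 i with hz | hz
    · rw [h01split i, hz]; ring
    · rw [h01split i, hz]; ring
  have hS0N : S0 ≤ Real.sqrt N := by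
    have hh : S0^2 ≤ N := by nlinarith [sq_nonneg S1]
    calc S0 = Real.sqrt (S0^2) := (Real.sqrt_sq hS0nn).symm
      _ ≤ Real.sqrt N := Real.sqrt_le_sqrt hh
  have hS01 : S0 + S1 ≤ Real.sqrt 2 * Real.sqrt N := by
    have hh : (S0+S1)^2 ≤ 2*N := by nlinarith [sq_nonneg (S0 - S1)]
    calc S0 + S1 = Real.sqrt ((S0+S1)^2) := (Real.sqrt_sq (by positivity)).symm
      _ ≤ Real.sqrt (2*N) := Real.sqrt_le_sqrt hh
      _ = Real.sqrt 2 * Real.sqrt N := Real.sqrt_mul (by norm_num) N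
  have hspos : (0:ℝ) < s := by exact_mod_cast hs
  have hsqrtspos : (0:ℝ) < Real.sqrt s := Real.sqrt_pos.2 hspos
  have sumSj : ∑ j ∈ Finset.Ico 1 (c+1), Real.sqrt (q j) ≤ S0 := by
    have step1 : ∑ j ∈ Finset.Ico 1 (c+1), Real.sqrt (q j)
        = ∑ i ∈ Finset.range c, Real.sqrt (q (1+i)) := by
      rw [Finset.sum_Ico_eq_sum_range]
      simp
    have step2 : ∑ i ∈ Finset.range c, Real.sqrt (q (1+i))
        ≤ ∑ i ∈ Finset.range c, a i / Real.sqrt s := by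
      apply Finset.sum_le_sum
      intro i _
      rw [add_comm 1 i]
      exact block_ineq i
    have step3 : ∑ i ∈ Finset.range c, a i / Real.sqrt s
        ≤ (∑ i ∈ T0, |h i|) / Real.sqrt s := by
      rw [← Finset.sum_div]
      apply (div_le_div_iff_of_pos_right hsqrtspos).2
      calc ∑ i ∈ Finset.range c, a i ≤ ∑ i ∈ Finset.range (c+1), a i := by
            apply Finset.sum_le_sum_of_subset_of_nonneg
            · exact Finset.range_subset_range.2 (by omega)
            · intro j _ _; exact ha0 j
        _ = ∑ i ∈ T0ᶜ, |h i| := sum_a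
        _ ≤ ∑ i ∈ T0, |h i| := hcone
    have step4 : (∑ i ∈ T0, |h i|) / Real.sqrt s ≤ S0 := by
      rw [div_le_iff₀ hsqrtspos]
      have hcs : (∑ i ∈ T0, |h i|)^2 ≤ (s : ℝ) * S0^2 := by
        calc (∑ i ∈ T0, |h i|)^2 ≤ (T0.card : ℝ) * ∑ i ∈ T0, |h i|^2 := by
              exact_mod_cast sq_sum_le_card_mul_sum_sq (s := T0) (f := fun i => |h i|)
          _ = (T0.card : ℝ) * ∑ i ∈ T0, h i ^ 2 := by simp [sq_abs]
          _ ≤ (s : ℝ) * ∑ i ∈ T0, h i ^ 2 := by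
              apply mul_le_mul_of_nonneg_right _
                (Finset.sum_nonneg fun i _ => sq_nonneg _)
              exact_mod_cast hT0
          _ = (s : ℝ) * S0^2 := by rw [hS0sq, hT0vsq]
      have h2 := Real.sqrt_le_sqrt hcs
      rw [Real.sqrt_sq (Finset.sum_nonneg fun i _ => abs_nonneg _)] at h2
      calc ∑ i ∈ T0, |h i| ≤ Real.sqrt ((s:ℝ) * S0^2) := h2
        _ = Real.sqrt s * S0 := by
            rw [Real.sqrt_mul (le_of_lt hspos), Real.sqrt_sq hS0nn]
        _ = S0 * Real.sqrt s := mul_comm _ _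
    calc ∑ j ∈ Finset.Ico 1 (c+1), Real.sqrt (q j)
        = ∑ i ∈ Finset.range c, Real.sqrt (q (1+i)) := step1
      _ ≤ ∑ i ∈ Finset.range c, a i / Real.sqrt s := step2
      _ ≤ (∑ i ∈ T0, |h i|) / Real.sqrt s := step3
      _ ≤ S0 := step4
  have ipchain : ∑ r, ((A *ᵥ h01) r)^2
      ≤ δ * (S0 + S1) * ∑ j ∈ Finset.Ico 1 (c+1), Real.sqrt (q j) := by
    have hval : ∀ r, (A *ᵥ h01) r = - ∑ j ∈ Finset.Ico 1 (c+1), (A *ᵥ v j) r := by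
      intro r; rw [hneg]; simp [Finset.sum_apply]
    have e1 : ∑ r, ((A *ᵥ h01) r)^2
        = - ∑ j ∈ Finset.Ico 1 (c+1), ∑ r, (A *ᵥ h01) r * (A *ᵥ v j) r := by
      calc ∑ r, ((A *ᵥ h01) r)^2 = ∑ r, (A *ᵥ h01) r * (A *ᵥ h01) r := by
            refine Finset.sum_congr rfl fun r _ => ?_; ring
        _ = ∑ r, (A *ᵥ h01) r * (- ∑ j ∈ Finset.Ico 1 (c+1), (A *ᵥ v j) r) := by
            refine Finset.sum_congr rfl fun r _ => ?_; rw [← hval r]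
        _ = ∑ r, -(∑ j ∈ Finset.Ico 1 (c+1), (A *ᵥ h01) r * (A *ᵥ v j) r) := by
            refine Finset.sum_congr rfl fun r _ => ?_
            rw [mul_neg, Finset.mul_sum]
        _ = - ∑ r, ∑ j ∈ Finset.Ico 1 (c+1), (A *ᵥ h01) r * (A *ᵥ v j) r :=
            Finset.sum_neg_distrib _
        _ = - ∑ j ∈ Finset.Ico 1 (c+1), ∑ r, (A *ᵥ h01) r * (A *ᵥ v j) r := by
            rw [Finset.sum_comm]
    rw [e1]
    have hb : ∀ j ∈ Finset.Ico 1 (c+1),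
        - ∑ r, (A *ᵥ h01) r * (A *ᵥ v j) r ≤ δ * (S0 + S1) * Real.sqrt (q j) := by
      intro j hj
      rw [Finset.mem_Ico] at hj
      have hsplit : ∀ r, (A *ᵥ h01) r = (A *ᵥ hT0v) r + (A *ᵥ v 0) r := by
        intro r; rw [h01fun, Matrix.mulVec_add]; simp
      have e2 : ∑ r, (A *ᵥ h01) r * (A *ᵥ v j) r
          = (∑ r, (A *ᵥ hT0v) r * (A *ᵥ v j) r)
            + (∑ r, (A *ᵥ v 0) r * (A *ᵥ v j) r) := by
        rw [← Finset.sum_add_distrib]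
        refine Finset.sum_congr rfl fun r _ => ?_
        rw [hsplit r]; ring
      have b1 := restro A s δ hRIP hT0v (v j) hT0vsp (vsp j) (d1 j)
      have b2 := restro A s δ hRIP (v 0) (v j) (vsp 0) (vsp j) (d2 j (by omega))
      rw [← hS0] at b1
      rw [← hS1] at b2
      have hqj : Real.sqrt (∑ i, (v j i)^2) = Real.sqrt (q j) := by rw [qeq]
      rw [hqj] at b1 b2
      have habs : |∑ r, (A *ᵥ h01) r * (A *ᵥ v j) r|
          ≤ δ * (S0 + S1) * Real.sqrt (q j) := by
        rw [e2]
        calc |(∑ r, (A *ᵥ hT0v) r * (A *ᵥ v j) r)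
              + (∑ r, (A *ᵥ v 0) r * (A *ᵥ v j) r)|
            ≤ |∑ r, (A *ᵥ hT0v) r * (A *ᵥ v j) r|
              + |∑ r, (A *ᵥ v 0) r * (A *ᵥ v j) r| := abs_add_le _ _
          _ ≤ δ * (S0 * Real.sqrt (q j)) + δ * (S1 * Real.sqrt (q j)) := add_le_add b1 b2
          _ = δ * (S0 + S1) * Real.sqrt (q j) := by ring
      linarith [neg_abs_le (∑ r, (A *ᵥ h01) r * (A *ᵥ v j) r), habs]
    calc - ∑ j ∈ Finset.Ico 1 (c+1), ∑ r, (A *ᵥ h01) r * (A *ᵥ v j) r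
        = ∑ j ∈ Finset.Ico 1 (c+1), -(∑ r, (A *ᵥ h01) r * (A *ᵥ v j) r) :=
          (Finset.sum_neg_distrib _).symm
      _ ≤ ∑ j ∈ Finset.Ico 1 (c+1), δ * (S0 + S1) * Real.sqrt (q j) :=
          Finset.sum_le_sum hb
      _ = δ * (S0 + S1) * ∑ j ∈ Finset.Ico 1 (c+1), Real.sqrt (q j) := by
          rw [Finset.mul_sum]
  have lower := (hRIP h01 h01sp).1
  have hsqrtNnn : 0 ≤ Real.sqrt N := Real.sqrt_nonneg _
  have hsumSjnn : 0 ≤ ∑ j ∈ Finset.Ico 1 (c+1), Real.sqrt (q j) :=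
    Finset.sum_nonneg fun j _ => Real.sqrt_nonneg _
  have upper : ∑ r, ((A *ᵥ h01) r)^2 ≤ Real.sqrt 2 * δ * N := by
    calc ∑ r, ((A *ᵥ h01) r)^2
        ≤ δ * (S0 + S1) * ∑ j ∈ Finset.Ico 1 (c+1), Real.sqrt (q j) := ipchain
      _ ≤ δ * (Real.sqrt 2 * Real.sqrt N) * Real.sqrt N := by
          apply mul_le_mul
          · exact mul_le_mul_of_nonneg_left hS01 hδ0
          · exact sumSj.trans hS0N
          · exact hsumSjnn
          · positivity
      _ = Real.sqrt 2 * δ * N := by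
          have hmm : Real.sqrt N * Real.sqrt N = N := Real.mul_self_sqrt hNnn
          rw [mul_assoc, mul_assoc, hmm]; ring
  have hcoeff : Real.sqrt 2 * δ < 1 - δ := by
    have h2 : Real.sqrt 2 * Real.sqrt 2 = 2 := Real.mul_self_sqrt (by norm_num)
    have hpos : (0:ℝ) < Real.sqrt 2 := by positivity
    nlinarith [hδ, hδ0]
  have hN0 : N ≤ 0 := by nlinarith [lower, upper, hcoeff, hNnn]
  have h01zero : h01 = 0 := eq_zero_of_sum_sq h01 hN0
  have hT0z : ∀ i ∈ T0, h i = 0 := by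
    intro i hi
    have hz := congrFun h01zero i
    simpa [h01_def, Finset.mem_union, hi] using hz
  have hT0sum0 : ∑ i ∈ T0, |h i| = 0 :=
    Finset.sum_eq_zero fun i hi => by rw [hT0z i hi]; simp
  have hcsum0 : ∑ i ∈ T0ᶜ, |h i| = 0 :=
    le_antisymm (by rw [hT0sum0] at hcone; exact hcone)
      (Finset.sum_nonneg fun i _ => abs_nonneg _)
  funext i
  show h i = 0
  by_cases hi : i ∈ T0
  · exact hT0z i hi
  · have hz := (Finset.sum_eq_zero_iff_of_nonneg
      (fun i _ => abs_nonneg (h i))).1 hcsum0 i (Finset.mem_compl.2 hi)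
    simpa using hz

end Main

lemma ripSet_nonempty {n m : ℕ} (s : ℕ) (A : Matrix (Fin n) (Fin m) ℝ) :
    {δ : ℝ | 0 ≤ δ ∧ ∀ x : Fin m → ℝ, Sparse s x →
      (1 - δ) * l2norm x ^ 2 ≤ l2norm (A *ᵥ x) ^ 2 ∧
      l2norm (A *ᵥ x) ^ 2 ≤ (1 + δ) * l2norm x ^ 2}.Nonempty := by
  refine ⟨1 + ∑ r, ∑ i, (A r i)^2, ?_, ?_⟩
  · positivity
  intro x _
  rw [l2_sq, l2_sq]
  constructor
  · have h1 : (1 - (1 + ∑ r, ∑ i, (A r i)^2)) ≤ 0 := by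
      have : (0:ℝ) ≤ ∑ r, ∑ i, (A r i)^2 := by positivity
      linarith
    have h2 : (0:ℝ) ≤ ∑ i, x i ^ 2 := by positivity
    have h3 : (0:ℝ) ≤ ∑ i, (A *ᵥ x) i ^ 2 := by positivity
    nlinarith
  · have hCS : ∀ r, (A *ᵥ x) r ^ 2 ≤ (∑ i, (A r i)^2) * ∑ i, x i ^ 2 := by
      intro r
      have := Finset.sum_mul_sq_le_sq_mul_sq Finset.univ (fun i => A r i) (fun i => x i)
      simpa [Matrix.mulVec, dotProduct] using this
    calc ∑ r, (A *ᵥ x) r ^ 2 ≤ ∑ r, (∑ i, (A r i)^2) * ∑ i, x i ^ 2 :=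
          Finset.sum_le_sum fun r _ => hCS r
      _ = (∑ r, ∑ i, (A r i)^2) * ∑ i, x i ^ 2 := by rw [Finset.sum_mul]
      _ ≤ (1 + (1 + ∑ r, ∑ i, (A r i)^2)) * ∑ i, x i ^ 2 := by
          apply mul_le_mul_of_nonneg_right _ (by positivity)
          linarith [Finset.sum_nonneg (fun r (_ : r ∈ Finset.univ) =>
            Finset.sum_nonneg fun i (_ : i ∈ Finset.univ) => sq_nonneg (A r i))]

/-- Noiseless Candès recovery: if `δ_{2s}(A) < √2 − 1` and `x` is `s`-sparse with
`Ax = b`, then `x` is the unique minimizer of `min ‖x̃‖₁` subject to `Ax̃ = b`. -/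
theorem stmt16 {n m : ℕ} (A : Matrix (Fin n) (Fin m) ℝ) (s : ℕ)
    (hRIP : ripConst (2 * s) A < Real.sqrt 2 - 1)
    (x : Fin m → ℝ) (hx : Sparse s x) (b : Fin n → ℝ) (hb : A *ᵥ x = b) :
    ∀ y : Fin m → ℝ, A *ᵥ y = b →
      l1norm x ≤ l1norm y ∧ (l1norm y ≤ l1norm x → y = x) := by
  classical
  have key : ∀ y' : Fin m → ℝ, A *ᵥ y' = b → l1norm y' ≤ l1norm x → y' = x := by
    intro y' hAy' hle
    rcases Nat.eq_zero_or_pos s with hs0 | hs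
    · -- s = 0 : x = 0
      have hx0 : x = 0 := by
        funext i
        by_contra hi
        have hne : {i | x i ≠ 0}.Nonempty := ⟨i, hi⟩
        have hpos := (Set.ncard_pos (Set.toFinite _)).2 hne
        rw [Sparse, hs0] at hx
        omega
      have hl1 : l1norm x = 0 := by simp [l1norm, hx0]
      rw [hl1] at hle
      rw [hx0]
      funext i
      have := (Finset.sum_eq_zero_iff_of_nonneg
        (fun i (_ : i ∈ Finset.univ) => abs_nonneg (y' i))).1
        (le_antisymm hle (Finset.sum_nonneg fun i _ => abs_nonneg _)) i (Finset.mem_univ i)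
      simpa using this
    · -- main case
      obtain ⟨δ, hδmem, hδlt⟩ := (csInf_lt_iff
        ⟨0, fun d hd => hd.1⟩ (ripSet_nonempty (2*s) A)).1 hRIP
      obtain ⟨hδ0, hδprop⟩ := hδmem
      have hRIPsum : ∀ z : Fin m → ℝ, Sparse (2*s) z →
          (1-δ) * (∑ i, z i ^ 2) ≤ (∑ i, (A *ᵥ z) i ^ 2) ∧
          (∑ i, (A *ᵥ z) i ^ 2) ≤ (1+δ) * (∑ i, z i ^ 2) := by
        intro z hz
        have := hδprop z hz
        rwa [l2_sq, l2_sq] at this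
      set T0 : Finset (Fin m) := Finset.univ.filter (fun i => x i ≠ 0) with hT0def
      have hT0card : T0.card ≤ s := by
        have : T0.card = {i | x i ≠ 0}.ncard := by
          rw [Set.ncard_eq_toFinset_card']
          congr 1
          ext i
          simp [hT0def]
        rw [this]; exact hx
      have hxz : ∀ i, i ∉ T0 → x i = 0 := by
        intro i hi
        by_contra hc
        exact hi (by simp [hT0def, hc])
      set h : Fin m → ℝ := fun i => y' i - x i with hhdef
      have hAh : A *ᵥ h = 0 := by
        have : h = y' - x := by funext i; simp [hhdef]
        rw [this, Matrix.mulVec_sub, hAy', hb, sub_self]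
      have hcone : ∑ i ∈ T0ᶜ, |h i| ≤ ∑ i ∈ T0, |h i| := by
        have hsplit : ∀ g : Fin m → ℝ, ∑ i, g i = ∑ i ∈ T0, g i + ∑ i ∈ T0ᶜ, g i :=
          fun g => (Finset.sum_add_sum_compl T0 g).symm
        have hx_l1 : l1norm x = ∑ i ∈ T0, |x i| := by
          rw [l1norm, hsplit (fun i => |x i|)]
          have : ∑ i ∈ T0ᶜ, |x i| = 0 :=
            Finset.sum_eq_zero fun i hi => by
              rw [hxz i (Finset.mem_compl.1 hi)]; simp
          rw [this, add_zero]
        have hy_l1 : l1norm y' = ∑ i ∈ T0, |x i + h i| + ∑ i ∈ T0ᶜ, |h i| := by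
          rw [l1norm, hsplit (fun i => |y' i|)]
          congr 1
          · exact Finset.sum_congr rfl fun i _ => by rw [hhdef]; congr 1; ring
          · exact Finset.sum_congr rfl fun i hi => by
              rw [hhdef]
              simp only
              rw [hxz i (Finset.mem_compl.1 hi)]
              congr 1; ring
        have hlb : ∀ i ∈ T0, |x i| - |h i| ≤ |x i + h i| := by
          intro i _
          have := abs_add_le (x i + h i) (-h i)
          simp at this
          linarith [this]
        have h1 : ∑ i ∈ T0, |x i| - ∑ i ∈ T0, |h i| ≤ ∑ i ∈ T0, |x i + h i| := by
          rw [← Finset.sum_sub_distrib]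
          exact Finset.sum_le_sum hlb
        rw [hy_l1, hx_l1] at hle
        linarith
      have hzero := candes_null A s hs δ hδlt hδ0 hRIPsum T0 hT0card h hAh hcone
      funext i
      have := congrFun hzero i
      simp only [hhdef, Pi.zero_apply] at this
      linarith [this]
  intro y hAy
  refine ⟨?_, key y hAy⟩
  by_contra hlt
  push_neg at hlt
  have := key y hAy (le_of_lt hlt)
  rw [this] at hlt
  exact lt_irrefl _ hlt
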